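/- If a strategy σ is myopically optimal at every chain H — i.e., σ(H) maximizes the decision maker's value V_d(H₋₁, 𝔠) subject to V_e(H₋₁, 𝔠) ≥ V_e(H₋₂, σ(H minus last element)) (constraint active when H has length ≥ 2) — then the decision maker's payoff is monotone along extensions: V_d(H, σ) ≥ V_d(H', σ) whenever H extends H'. -/

import Mathlib

/-- A consistent sequence: a nonempty, strictly increasing chain beginning at `h₀`. -/
def Cons {𝓗 : Type} [Preorder 𝓗] (h₀ : 𝓗) (H : List 𝓗) : Prop :=
  H ≠ [] ∧ H.head? = some h₀ ∧ H.Chain' (· < ·)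

/-- Auxiliary: along a strict chain of length ≥ 2, the last element of `dropLast`
is below the last element. -/
lemma lastD_dropLast_lt {α : Type} [Preorder α] (d : α) (l : List α)
    (h : l.Chain' (· < ·)) (h2 : 2 ≤ l.length) :
    l.dropLast.getLastD d < l.getLastD d := by
  have hne : l ≠ [] := by rintro rfl; simp at h2
  have hdne : l.dropLast ≠ [] := by
    have hl := l.length_dropLast
    intro he
    rw [he] at hl
    simp at hl
    omega
  have heq : l.dropLast ++ [l.getLast hne] = l := List.dropLast_append_getLast hne
  have h' := h
  rw [← heq, List.Chain', List.isChain_append] at h'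
  have hlt : l.dropLast.getLast hdne < l.getLast hne := by
    refine h'.2.2 _ ?_ _ rfl
    rw [List.getLast?_eq_getLast hdne]; rfl
  rw [List.getLastD_eq_getLast?, List.getLastD_eq_getLast?,
    List.getLast?_eq_getLast hdne, List.getLast?_eq_getLast hne]
  exact hlt

/-- Auxiliary: a proper prefix is a prefix of `dropLast`. -/
lemma prefix_dropLast_of_ne {α : Type} (l l' : List α) (h : l' <+: l) (hne : l' ≠ l) :
    l' <+: l.dropLast := by
  obtain ⟨t, rfl⟩ := h
  have ht : t ≠ [] := by rintro rfl; simp at hne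
  rw [List.dropLast_append_of_ne_nil ht]
  exact ⟨t.dropLast, rfl⟩

/-- Auxiliary: `dropLast` of a consistent sequence of length ≥ 2 is consistent. -/
lemma cons_dropLast {𝓗 : Type} [Preorder 𝓗] (h₀ : 𝓗) (H : List 𝓗)
    (hH : Cons h₀ H) (h2 : 2 ≤ H.length) : Cons h₀ H.dropLast := by
  obtain ⟨hne, hhd, hch⟩ := hH
  refine ⟨?_, ?_, hch.prefix H.dropLast_prefix⟩
  · have hl := H.length_dropLast
    intro he
    rw [he] at hl
    simp at hl
    omega
  · match H, h2 with
    | x :: y :: t, _ => simpa using hhd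

/-- if a strategy is myopically optimal at every chain, then the
decision maker's payoff is monotone along chain extensions. -/
theorem myopic_optimality_implies_Vd_monotone
    {𝓗 : Type} [PartialOrder 𝓗] (h₀ : 𝓗)
    (C : 𝓗 → Type) (Vd Ve : (h : 𝓗) → C h → ℝ)
    (pb : ∀ {h h' : 𝓗}, h ≤ h' → C h → C h')
    (hpbd : ∀ {h h' : 𝓗} (l : h ≤ h') (c : C h), Vd h' (pb l c) = Vd h c)
    (hpbe : ∀ {h h' : 𝓗} (l : h ≤ h') (c : C h), Ve h' (pb l c) = Ve h c)
    (σ : (H : List 𝓗) → C (H.getLastD h₀))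
    -- myopic optimality at length-one chains: unconstrained maximization of Vd
    (hmyo1 : ∀ H : List 𝓗, Cons h₀ H → H.length = 1 →
      ∀ c : C (H.getLastD h₀), Vd (H.getLastD h₀) c ≤ Vd (H.getLastD h₀) (σ H))
    -- myopic optimality at longer chains: maximize Vd subject to the IC constraint
    (hmyo : ∀ H : List 𝓗, Cons h₀ H → 2 ≤ H.length →
      Ve (H.dropLast.getLastD h₀) (σ H.dropLast) ≤ Ve (H.getLastD h₀) (σ H) ∧
      ∀ c : C (H.getLastD h₀),
        Ve (H.dropLast.getLastD h₀) (σ H.dropLast) ≤ Ve (H.getLastD h₀) c →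
        Vd (H.getLastD h₀) c ≤ Vd (H.getLastD h₀) (σ H)) :
    ∀ H H' : List 𝓗, Cons h₀ H → H' ≠ [] → H' <+: H →
      Vd (H'.getLastD h₀) (σ H') ≤ Vd (H.getLastD h₀) (σ H) := by
  suffices key : ∀ n (H H' : List 𝓗), H.length ≤ n → Cons h₀ H → H' ≠ [] → H' <+: H →
      Vd (H'.getLastD h₀) (σ H') ≤ Vd (H.getLastD h₀) (σ H) by
    intro H H' hH hne hpre
    exact key H.length H H' le_rfl hH hne hpre
  intro n
  induction n with
  | zero =>
    intro H H' hlen hH hne hpre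
    exact absurd (List.length_eq_zero_iff.mp (Nat.le_zero.mp hlen)) hH.1
  | succ n ih =>
    intro H H' hlen hH hne hpre
    by_cases heq : H' = H
    · subst heq; exact le_rfl
    · have hlt : H'.length < H.length := by
        rcases lt_or_eq_of_le hpre.length_le with h | h
        · exact h
        · exact absurd (hpre.eq_of_length h) heq
      have h2 : 2 ≤ H.length := by
        have : 1 ≤ H'.length := List.length_pos_iff.mpr hne
        omega
      have hpre' : H' <+: H.dropLast := prefix_dropLast_of_ne H H' hpre heq
      have hdCons : Cons h₀ H.dropLast := cons_dropLast h₀ H hH h2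
      have hle : H.dropLast.getLastD h₀ ≤ H.getLastD h₀ :=
        (lastD_dropLast_lt h₀ H hH.2.2 h2).le
      have hstep : Vd (H.dropLast.getLastD h₀) (σ H.dropLast) ≤ Vd (H.getLastD h₀) (σ H) := by
        have hc := (hmyo H hH h2).2 (pb hle (σ H.dropLast)) (hpbe hle _).ge
        calc Vd (H.dropLast.getLastD h₀) (σ H.dropLast)
            = Vd (H.getLastD h₀) (pb hle (σ H.dropLast)) := (hpbd hle _).symm
          _ ≤ Vd (H.getLastD h₀) (σ H) := hc
      have hlen' : H.dropLast.length ≤ n := by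
        have := H.length_dropLast
        omega
      exact (ih H.dropLast H' hlen' hdCons hne hpre').trans hstep
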